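/- For all integers n ≥ 1 and 1 ≤ j ≤ n, and all z: P_n(z; α+j, β−j) = P_n(z) + Σ_{l=1}^{j} C^{(l)}_{n,j} · P_{n−l}(z). -/

import Mathlib

open Finset

/-- Pochhammer symbol `(a)_k = a (a+1) ⋯ (a+k-1)`. -/
noncomputable def poch (a : ℝ) (k : ℕ) : ℝ := ∏ i ∈ Finset.range k, (a + (i : ℝ))

/-- The Hendriksen–van Rossum polynomial `P_n(z; α, β)`. -/
noncomputable def HR (α β : ℝ) (n : ℕ) (z : ℝ) : ℝ :=
  (poch β n / poch (α + 1) n) *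
    ∑ k ∈ Finset.range (n + 1),
      poch (-(n : ℝ)) k * poch (α + 1) k /
          (poch (1 - β - (n : ℝ)) k * (Nat.factorial k : ℝ)) * z ^ k

/-- `d_m(α,β) = −(m+β)/(m+α+1)`. -/
noncomputable def dco (α β m : ℝ) : ℝ := -(m + β) / (m + α + 1)

/-- `b_m(α,β) = −m(m+α+β)/((m+α)(m+α+1))`. -/
noncomputable def bco (α β m : ℝ) : ℝ := -(m * (m + α + β)) / ((m + α) * (m + α + 1))

/-- Connection coefficients `C^{(l)}_{n,j}` (computed with parameters `(α,β)`):
`C^{(0)}_{n,j} = 1`; `C^{(1)}_{n,j} = Σ_{k=0}^{j−1} b_n(α+k, β−k)`;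
`C^{(j)}_{n,j} = Π_{k=0}^{j−1} b_{n−k}(α+j−1−k, β−j+1+k)`;
`C^{(l)}_{n,j} = C^{(l)}_{n,j−1} + b_n(α+j−1, β−j+1)·C^{(l−1)}_{n−1,j−1}` for `2 ≤ l ≤ j−1`;
and `0` out of range. Arguments: `Ccoef α β n j l`. -/
noncomputable def Ccoef (α β : ℝ) : ℕ → ℕ → ℕ → ℝ
  | _, _, 0 => 1
  | n, j, 1 =>
      if 1 ≤ j then ∑ k ∈ Finset.range j, bco (α + (k : ℝ)) (β - (k : ℝ)) (n : ℝ) else 0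
  | _, 0, (_ + 2) => 0
  | n, (j + 1), (l + 2) =>
      if l + 2 = j + 1 then
        ∏ k ∈ Finset.range (j + 1),
          bco (α + (j : ℝ) - (k : ℝ)) (β - (j : ℝ) + (k : ℝ)) ((n : ℝ) - (k : ℝ))
      else if l + 2 ≤ j then
        Ccoef α β n j (l + 2)
          + bco (α + (j : ℝ)) (β - (j : ℝ)) (n : ℝ) * Ccoef α β (n - 1) j (l + 1)
      else 0

/-! ### Auxiliary lemmas -/

lemma poch_succ_right (a : ℝ) (k : ℕ) : poch a (k+1) = poch a k * (a + k) := by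
  rw [poch, Finset.prod_range_succ]; rfl

lemma poch_succ_left (a : ℝ) (k : ℕ) : poch a (k+1) = a * poch (a+1) k := by
  rw [poch, Finset.prod_range_succ']
  simp only [Nat.cast_zero, add_zero]
  rw [mul_comm]
  congr 1
  refine Finset.prod_congr rfl fun i _ => ?_
  push_cast; ring

lemma poch_shift (a : ℝ) (ha : a ≠ 0) (k : ℕ) : poch (a+1) k = poch a k * (a + k) / a := by
  rw [eq_div_iff ha, mul_comm, ← poch_succ_left, poch_succ_right]

lemma poch_ne_zero {a : ℝ} (k : ℕ) (h : ∀ i : ℕ, i < k → a + i ≠ 0) : poch a k ≠ 0 :=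
  Finset.prod_ne_zero_iff.mpr fun i hi => h i (Finset.mem_range.mp hi)

lemma shift_ne (α : ℝ) (hα : ∀ m : ℤ, α ≠ (m : ℝ)) (c : ℤ) : α + (c : ℝ) ≠ 0 := by
  intro h
  exact hα (-c) (by push_cast; linarith)

lemma genA (a1 p q y z c T r x s u S F : ℝ) (hq : q ≠ 0) (hy : y ≠ 0) (hz : z ≠ 0)
    (hc : c ≠ 0) (hs : s ≠ 0) (hu : u ≠ 0) (hS : S ≠ 0) (hF : F ≠ 0) :
    ((a1*p)/(q*y*z/c)) * ( T * (r*x/c) / ((s*u/S)*F) )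
      = (a1*x*S*(p*T*r))/(q*y*z*s*u*F) := by
  field_simp

lemma genB (p b q y z T r s u F : ℝ) (hq : q ≠ 0) (hy : y ≠ 0) (hz : z ≠ 0)
    (hs : s ≠ 0) (hu : u ≠ 0) (hF : F ≠ 0) :
    ((p*b)/(q*y)) * (T*r/(s*F)) = (b*z*u*(p*T*r))/(q*y*z*s*u*F) := by
  field_simp

lemma genC (p q r s T F G V Y Z S u w : ℝ) (hq : q ≠ 0) (hY : Y ≠ 0) (hZ : Z ≠ 0)
    (hs : s ≠ 0) (hu : u ≠ 0) (hS : S ≠ 0) (hF : F ≠ 0) (hV : V ≠ 0) :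
    (-(V*G)/(Y*Z)) * ( p/q * ( (T*w/(-V)) * r / ((s*u/S)*F) ) )
      = (G*w*S*(p*T*r))/(q*Y*Z*s*u*F) := by
  rw [neg_div, neg_mul, div_neg, mul_div_assoc]
  field_simp

lemma coef_id (α β : ℝ) (hα : ∀ m : ℤ, α ≠ (m : ℝ)) (hβ : ∀ m : ℤ, β ≠ (m : ℝ))
    (m k : ℕ) :
    poch (β - 1) (m+1) / poch (α + 1 + 1) (m+1) *
      (poch (-((m:ℝ)+1)) k * poch (α + 1 + 1) k /
        (poch (1 - (β - 1) - ((m:ℝ)+1)) k * (Nat.factorial k : ℝ)))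
    = poch β (m+1) / poch (α + 1) (m+1) *
      (poch (-((m:ℝ)+1)) k * poch (α + 1) k /
        (poch (1 - β - ((m:ℝ)+1)) k * (Nat.factorial k : ℝ)))
    + bco α β ((m:ℝ)+1) *
      (poch β m / poch (α + 1) m *
        (poch (-(m:ℝ)) k * poch (α + 1) k /
          (poch (1 - β - (m:ℝ)) k * (Nat.factorial k : ℝ)))) := by
  have hα1 : α + 1 ≠ 0 := fun h => shift_ne α hα 1 (by push_cast; linarith)
  have hS : (1 : ℝ) - β - ((m:ℝ)+1) ≠ 0 :=
    fun h => shift_ne β hβ (m:ℤ) (by push_cast; linarith)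
  have hu : (1 : ℝ) - β - ((m:ℝ)+1) + k ≠ 0 :=
    fun h => shift_ne β hβ ((m:ℤ) - k) (by push_cast; linarith)
  have hV : (m:ℝ) + 1 ≠ 0 := by positivity
  have hq : poch (α+1) m ≠ 0 := poch_ne_zero m fun i _ h =>
    shift_ne α hα (1 + (i:ℤ)) (by push_cast; linarith)
  have hy : α + 1 + (m:ℝ) ≠ 0 :=
    fun h => shift_ne α hα (1 + (m:ℤ)) (by push_cast; linarith)
  have hz : α + 1 + ((m:ℝ)+1) ≠ 0 :=
    fun h => shift_ne α hα (2 + (m:ℤ)) (by push_cast; linarith)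
  have hY : (m:ℝ) + 1 + α ≠ 0 :=
    fun h => shift_ne α hα ((m:ℤ)+1) (by push_cast; linarith)
  have hZ : (m:ℝ) + 1 + α + 1 ≠ 0 :=
    fun h => shift_ne α hα ((m:ℤ)+2) (by push_cast; linarith)
  have hs : poch (1 - β - ((m:ℝ)+1)) k ≠ 0 := poch_ne_zero k fun i _ h =>
    shift_ne β hβ ((m:ℤ) - i) (by push_cast; linarith)
  have hF : (Nat.factorial k : ℝ) ≠ 0 := by positivity
  have E1 : poch (β - 1) (m+1) = (β - 1) * poch β m := by
    rw [poch_succ_left, show β - 1 + 1 = β by ring]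
  have E2 : poch β (m+1) = poch β m * (β + m) := poch_succ_right β m
  have E3 : poch (α+1) (m+1) = poch (α+1) m * (α + 1 + m) := poch_succ_right (α+1) m
  have E4 : poch (α+1+1) (m+1) = poch (α+1) (m+1) * (α + 1 + ((m:ℝ)+1)) / (α+1) := by
    rw [poch_shift (α+1) hα1 (m+1)]; push_cast; ring
  have E5 : poch (α+1+1) k = poch (α+1) k * (α + 1 + k) / (α+1) := poch_shift (α+1) hα1 k
  have E6 : poch (1 - (β-1) - ((m:ℝ)+1)) k
      = poch (1 - β - ((m:ℝ)+1)) k * (1 - β - ((m:ℝ)+1) + k) / (1 - β - ((m:ℝ)+1)) := by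
    rw [show (1 : ℝ) - (β-1) - ((m:ℝ)+1) = (1 - β - ((m:ℝ)+1)) + 1 by ring, poch_shift _ hS]
  have E7 : poch (1 - β - (m:ℝ)) k
      = poch (1 - β - ((m:ℝ)+1)) k * (1 - β - ((m:ℝ)+1) + k) / (1 - β - ((m:ℝ)+1)) := by
    rw [show (1 : ℝ) - β - (m:ℝ) = (1 - β - ((m:ℝ)+1)) + 1 by ring, poch_shift _ hS]
  have E8 : poch (-(m:ℝ)) k
      = poch (-((m:ℝ)+1)) k * (-((m:ℝ)+1) + k) / (-((m:ℝ)+1)) := by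
    rw [show -(m:ℝ) = (-((m:ℝ)+1)) + 1 by ring, poch_shift _ (neg_ne_zero.mpr hV)]
  have Ha : poch (β - 1) (m+1) / poch (α + 1 + 1) (m+1) *
      (poch (-((m:ℝ)+1)) k * poch (α + 1 + 1) k /
        (poch (1 - (β - 1) - ((m:ℝ)+1)) k * (Nat.factorial k : ℝ)))
      = ((β-1)*(α+1+(k:ℝ))*(1 - β - ((m:ℝ)+1))*(poch β m * poch (-((m:ℝ)+1)) k * poch (α+1) k))
        / (poch (α+1) m * (α+1+(m:ℝ)) * (α+1+((m:ℝ)+1)) * poch (1 - β - ((m:ℝ)+1)) k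
            * (1 - β - ((m:ℝ)+1) + k) * (Nat.factorial k : ℝ)) := by
    rw [E1, E4, E3, E5, E6]
    exact genA (β-1) (poch β m) (poch (α+1) m) _ _ _ _ (poch (α+1) k) _ _ _ _ _
      hq hy hz hα1 hs hu hS hF
  have Hb : poch β (m+1) / poch (α + 1) (m+1) *
      (poch (-((m:ℝ)+1)) k * poch (α + 1) k /
        (poch (1 - β - ((m:ℝ)+1)) k * (Nat.factorial k : ℝ)))
      = ((β+(m:ℝ))*(α+1+((m:ℝ)+1))*(1 - β - ((m:ℝ)+1) + k)*(poch β m * poch (-((m:ℝ)+1)) k * poch (α+1) k))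
        / (poch (α+1) m * (α+1+(m:ℝ)) * (α+1+((m:ℝ)+1)) * poch (1 - β - ((m:ℝ)+1)) k
            * (1 - β - ((m:ℝ)+1) + k) * (Nat.factorial k : ℝ)) := by
    rw [E2, E3]
    exact genB (poch β m) _ (poch (α+1) m) _ _ (poch (-((m:ℝ)+1)) k) (poch (α+1) k) _ _ _
      hq hy hz hs hu hF
  have Hc : bco α β ((m:ℝ)+1) *
      (poch β m / poch (α + 1) m *
        (poch (-(m:ℝ)) k * poch (α + 1) k /
          (poch (1 - β - (m:ℝ)) k * (Nat.factorial k : ℝ))))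
      = ((((m:ℝ)+1)+α+β)*(-((m:ℝ)+1)+k)*(1 - β - ((m:ℝ)+1))*(poch β m * poch (-((m:ℝ)+1)) k * poch (α+1) k))
        / (poch (α+1) m * (α+1+(m:ℝ)) * (α+1+((m:ℝ)+1)) * poch (1 - β - ((m:ℝ)+1)) k
            * (1 - β - ((m:ℝ)+1) + k) * (Nat.factorial k : ℝ)) := by
    rw [E8, E7, bco]
    rw [genC (poch β m) (poch (α+1) m) (poch (α+1) k) (poch (1 - β - ((m:ℝ)+1)) k)
      (poch (-((m:ℝ)+1)) k) (Nat.factorial k : ℝ) (((m:ℝ)+1)+α+β) ((m:ℝ)+1)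
      ((m:ℝ)+1+α) ((m:ℝ)+1+α+1) (1 - β - ((m:ℝ)+1)) (1 - β - ((m:ℝ)+1) + k)
      (-((m:ℝ)+1)+k) hq hY hZ hs hu hS hF hV]
    congr 1
    ring
  rw [Ha, Hb, Hc, ← add_div]
  congr 1
  ring

lemma onestep (α β : ℝ) (hα : ∀ m : ℤ, α ≠ (m : ℝ)) (hβ : ∀ m : ℤ, β ≠ (m : ℝ))
    (m : ℕ) (z : ℝ) :
    HR (α+1) (β-1) (m+1) z = HR α β (m+1) z + bco α β ((m:ℝ)+1) * HR α β m z := by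
  simp only [HR]
  push_cast
  have h0 : poch (-(m:ℝ)) (m+1) = 0 := by
    refine Finset.prod_eq_zero (Finset.self_mem_range_succ m) ?_
    simp
  have hext : ∑ k ∈ Finset.range (m+1+1),
        poch (-(m:ℝ)) k * poch (α+1) k /
          (poch (1 - β - (m:ℝ)) k * (Nat.factorial k : ℝ)) * z ^ k
      = ∑ k ∈ Finset.range (m+1),
        poch (-(m:ℝ)) k * poch (α+1) k /
          (poch (1 - β - (m:ℝ)) k * (Nat.factorial k : ℝ)) * z ^ k := by
    rw [Finset.sum_range_succ, h0]
    simp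
  rw [← hext, Finset.mul_sum, Finset.mul_sum, Finset.mul_sum, Finset.mul_sum,
    ← Finset.sum_add_distrib]
  refine Finset.sum_congr rfl fun k _ => ?_
  have := coef_id α β hα hβ m k
  linear_combination z ^ k * this

/-- Out-of-range vanishing. -/
lemma Ccoef_out (α β : ℝ) (n j : ℕ) (hj : 1 ≤ j) : Ccoef α β n j (j+1) = 0 := by
  obtain ⟨j', rfl⟩ : ∃ j', j = j' + 1 := ⟨j - 1, by omega⟩
  rw [Ccoef, if_neg (by omega), if_neg (by omega)]

lemma Ccoef_diag (α β : ℝ) (N j : ℕ) (hj : 1 ≤ j) :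
    Ccoef α β N j j = ∏ k ∈ Finset.range j,
      bco (α + (j:ℝ) - 1 - (k:ℝ)) (β - (j:ℝ) + 1 + (k:ℝ)) ((N:ℝ) - (k:ℝ)) := by
  match j, hj with
  | 1, _ =>
    rw [Ccoef, if_pos le_rfl]
    simp only [Finset.sum_range_one, Finset.prod_range_one]
    norm_num
  | (j'+2), _ =>
    rw [Ccoef, if_pos rfl]
    refine Finset.prod_congr rfl fun k _ => ?_
    push_cast
    ring_nf

/-- The key recursion for the connection coefficients. -/
lemma Ccoef_rec (α β : ℝ) (n j i : ℕ) (hj : 1 ≤ j) (hn : 1 ≤ n) (hi : i ≤ j) :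
    Ccoef α β n (j+1) (i+1) = Ccoef α β n j (i+1)
      + bco (α + (j:ℝ)) (β - (j:ℝ)) (n:ℝ) * Ccoef α β (n-1) j i := by
  have hcast : ((n-1 : ℕ) : ℝ) = (n:ℝ) - 1 := by
    have : (1:ℕ) ≤ n := hn
    push_cast [Nat.cast_sub this]
    ring
  match i with
  | 0 =>
    have e1 : Ccoef α β n (j+1) 1
        = ∑ k ∈ Finset.range (j+1), bco (α + (k:ℝ)) (β - (k:ℝ)) (n:ℝ) := by
      rw [Ccoef, if_pos (by omega)]
    have e2 : Ccoef α β n j 1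
        = ∑ k ∈ Finset.range j, bco (α + (k:ℝ)) (β - (k:ℝ)) (n:ℝ) := by
      rw [Ccoef, if_pos hj]
    have e3 : Ccoef α β (n-1) j 0 = 1 := by rw [Ccoef]
    rw [show (0:ℕ)+1 = 1 from rfl, e1, e2, e3, Finset.sum_range_succ]
    ring
  | (i'+1) =>
    by_cases hij : i' + 1 < j
    · rw [show i' + 1 + 1 = i' + 2 from rfl, Ccoef, if_neg (by omega), if_pos (by omega)]
    · have hij' : i' + 1 = j := by omega
      subst hij'
      rw [show Ccoef α β n (i'+1) (i'+1+1) = 0 from Ccoef_out α β n (i'+1) (by omega),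
        Ccoef_diag α β (n-1) (i'+1) (by omega)]
      rw [show i'+1+1 = i'+2 from rfl, Ccoef, if_pos rfl]
      rw [Finset.prod_range_succ', zero_add, mul_comm]
      push_cast [hcast]
      congr 1
      · norm_num
      · refine Finset.prod_congr rfl fun k _ => ?_
        ring_nf

lemma main_aux (α β : ℝ) (hα : ∀ m : ℤ, α ≠ (m : ℝ)) (hβ : ∀ m : ℤ, β ≠ (m : ℝ)) :
    ∀ j : ℕ, 1 ≤ j → ∀ n : ℕ, j ≤ n → ∀ z : ℝ,
      HR (α + (j:ℝ)) (β - (j:ℝ)) n z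
        = HR α β n z + ∑ i ∈ Finset.range j, Ccoef α β n j (i+1) * HR α β (n - (i+1)) z := by
  intro j
  induction j with
  | zero => omega
  | succ j IH =>
    intro _ n hn z
    obtain ⟨m, rfl⟩ : ∃ m, n = m + 1 := ⟨n - 1, by omega⟩
    by_cases hj : 1 ≤ j
    · -- inductive step
      have hjm : j ≤ m := by omega
      have hα' : ∀ t : ℤ, α + (j:ℝ) ≠ (t : ℝ) := fun t h =>
        hα (t - j) (by push_cast; linarith)
      have hβ' : ∀ t : ℤ, β - (j:ℝ) ≠ (t : ℝ) := fun t h =>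
        hβ (t + j) (by push_cast; linarith)
      rw [show ((j+1:ℕ):ℝ) = ((j:ℕ):ℝ)+1 by push_cast; ring,
        show α + ((j:ℝ)+1) = (α + (j:ℝ)) + 1 by ring,
        show β - ((j:ℝ)+1) = (β - (j:ℝ)) - 1 by ring,
        onestep (α + (j:ℝ)) (β - (j:ℝ)) hα' hβ' m z,
        IH hj (m+1) (by omega) z, IH hj m hjm z]
      have hrec : ∀ i ∈ Finset.range (j+1),
          Ccoef α β (m+1) (j+1) (i+1) * HR α β (m+1-(i+1)) z
          = Ccoef α β (m+1) j (i+1) * HR α β (m+1-(i+1)) z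
            + bco (α + (j:ℝ)) (β - (j:ℝ)) ((m:ℝ)+1)
              * (Ccoef α β m j i * HR α β (m+1-(i+1)) z) := by
        intro i hi
        rw [show Ccoef α β m j i = Ccoef α β (m+1-1) j i from rfl,
          show ((m:ℝ)+1) = ((m+1:ℕ):ℝ) from by push_cast; ring,
          Ccoef_rec α β (m+1) j i hj (by omega)
            (Nat.lt_succ_iff.mp (Finset.mem_range.mp hi))]
        ring
      have hsum : ∑ i ∈ Finset.range (j+1), Ccoef α β (m+1) (j+1) (i+1) * HR α β (m+1-(i+1)) z
          = ∑ i ∈ Finset.range j, Ccoef α β (m+1) j (i+1) * HR α β (m+1-(i+1)) z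
            + bco (α + (j:ℝ)) (β - (j:ℝ)) ((m:ℝ)+1)
              * (HR α β m z + ∑ i ∈ Finset.range j, Ccoef α β m j (i+1) * HR α β (m-(i+1)) z) := by
        rw [Finset.sum_congr rfl hrec, Finset.sum_add_distrib, Finset.sum_range_succ,
          Ccoef_out α β (m+1) j hj, zero_mul, add_zero, ← Finset.mul_sum,
          Finset.sum_range_succ']
        congr 1
        rw [show Ccoef α β m j 0 = 1 from by rw [Ccoef], one_mul]
        simp only [Nat.succ_sub_succ, Nat.add_sub_cancel, Nat.zero_add, Nat.sub_zero]
        ring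
      rw [hsum]
      ring
    · -- base case j = 0
      have hj0 : j = 0 := by omega
      subst hj0
      have hC : Ccoef α β (m+1) 1 1 = bco α β ((m:ℝ)+1) := by
        rw [Ccoef, if_pos le_rfl]
        push_cast [Finset.sum_range_one]
        norm_num
      have h1 := onestep α β hα hβ m z
      rw [show (((0:ℕ)+1:ℕ):ℝ) = 1 from by norm_num,
        show α + (1:ℝ) = α + 1 from rfl, show β - (1:ℝ) = β - 1 from rfl, h1]
      simp only [Finset.sum_range_one, Nat.zero_add, Nat.add_sub_cancel]
      rw [hC]

/-- For `1 ≤ j ≤ n`: `P_n(z; α+j, β−j) = P_n(z) + Σ_{l=1}^{j} C^{(l)}_{n,j} P_{n−l}(z)`. -/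
theorem stmt12 (α β : ℝ)
    (hα : ∀ m : ℤ, α ≠ (m : ℝ)) (hβ : ∀ m : ℤ, β ≠ (m : ℝ))
    (hαβ : ∀ m : ℤ, α + β ≠ (m : ℝ))
    (n j : ℕ) (hn : 1 ≤ n) (hj1 : 1 ≤ j) (hjn : j ≤ n) (z : ℝ) :
    HR (α + (j : ℝ)) (β - (j : ℝ)) n z
      = HR α β n z + ∑ l ∈ Finset.Icc 1 j, Ccoef α β n j l * HR α β (n - l) z := by
  rw [main_aux α β hα hβ j hj1 n hjn z]
  congr 1
  rw [← Finset.Ico_add_one_right_eq_Icc, Finset.sum_Ico_eq_sum_range]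
  refine Finset.sum_congr (by norm_num) fun i _ => by rw [Nat.add_comm 1 i]
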